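/- For s, t > 0, s + t > 1, s ≠ 1, q ∈ (0,1), let q₁ = (0, qt/((t−s)q + s)) and q₂ = ((1−q)s²/((t−1)(s+t)q + s), t(s + q(t−1))/((t−1)(s+t)q + s)). Then the line through q₁ and q₂ is parallel to the line through (0,0) and (s,t) if and only if s + t = 2. -/

import Mathlib

theorem stmt10 (s t q : ℝ) (hs : 0 < s) (ht : 0 < t) (hst : 1 < s + t)
    (hs1 : s ≠ 1) (hq : q ∈ Set.Ioo (0 : ℝ) 1) :
    let q₁ : ℝ × ℝ := (0, q * t / ((t - s) * q + s))
    let q₂ : ℝ × ℝ := ((1 - q) * s ^ 2 / ((t - 1) * (s + t) * q + s),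
                       t * (s + q * (t - 1)) / ((t - 1) * (s + t) * q + s))
    -- the line through q₁ and q₂ is parallel to the line through (0,0) and (s,t)
    (∃ k : ℝ, q₂ - q₁ = k • ((s, t) : ℝ × ℝ)) ↔ s + t = 2 := by
  obtain ⟨hq0, hq1⟩ := hq
  intro q₁ q₂
  have hD1 : (t - s) * q + s > 0 := by nlinarith
  have hD2 : (t - 1) * (s + t) * q + s > 0 := by
    nlinarith [mul_pos (mul_pos ht hq0) (by linarith : (0:ℝ) < s + t - 1),
      mul_pos hs (by linarith : (0:ℝ) < 1 - q)]
  constructor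
  · rintro ⟨k, hk⟩
    have h1 : q₂.1 - q₁.1 = k * s := congrArg Prod.fst hk
    have h2 : q₂.2 - q₁.2 = k * t := congrArg Prod.snd hk
    have hc : t * (q₂.1 - q₁.1) = s * (q₂.2 - q₁.2) := by rw [h1, h2]; ring
    simp only [q₁, q₂] at hc
    rw [sub_zero, div_sub_div _ _ hD2.ne' hD1.ne', ← mul_div_assoc, ← mul_div_assoc,
      div_eq_div_iff hD2.ne' (mul_ne_zero hD2.ne' hD1.ne')] at hc
    have hne : s * t * ((t - 1) * (s + t) * q + s) ≠ 0 := by positivity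
    have key' : (q * s * (s + t - 2) * (1 - q)) * (s * t * ((t - 1) * (s + t) * q + s)) = 0 := by
      linear_combination -hc
    have key : q * s * (s + t - 2) * (1 - q) = 0 :=
      (mul_eq_zero.mp key').resolve_right hne
    rcases mul_eq_zero.mp key with h | h
    · rcases mul_eq_zero.mp h with h' | h'
      · rcases mul_eq_zero.mp h' with h'' | h''
        · linarith
        · linarith
      · linarith
    · linarith
  · intro h2
    refine ⟨(1 - q) * s / ((t - 1) * (s + t) * q + s), ?_⟩
    have ht2 : t = 2 - s := by linarith
    subst ht2
    apply Prod.ext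
    · simp only [q₁, q₂, Prod.fst_sub, Prod.smul_fst, smul_eq_mul]
      field_simp
      ring
    · simp only [q₁, q₂, Prod.snd_sub, Prod.smul_snd, smul_eq_mul]
      rw [div_mul_eq_mul_div, div_sub_div _ _ hD2.ne' hD1.ne', div_eq_div_iff (by positivity) hD2.ne']
      ring
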